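/- For every integer k ≥ 2, the map sending a standard Young tableau T of shape (2,2,2,1^{k−2}) to the set {T(1,2), T(2,2), T(3,2)} of its second-column entries is injective, and its image is exactly the collection of 3-element subsets of {2,3,…,k+4} other than the k+3 exceptional subsets {2,3,j} for 4 ≤ j ≤ k+4, {2,4,5}, and {3,4,5}. -/

import Mathlib

open Polynomial

/-- An increasing tableau of rectangular shape `a × b` (cells indexed from 0) with
entries in `{1, …, m}`, strictly increasing along rows and columns, and normalized
to be `0` outside the shape. -/
def IsInc (a b m : ℕ) (T : ℕ → ℕ → ℕ) : Prop :=
  (∀ i j, i < a → j < b → 1 ≤ T i j ∧ T i j ≤ m) ∧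
  (∀ i j j', i < a → j < j' → j' < b → T i j < T i j') ∧
  (∀ i i' j, i < i' → i' < a → j < b → T i j < T i' j) ∧
  (∀ i j, ¬(i < a ∧ j < b) → T i j = 0)

/-- The tableau is packed with maximum entry exactly `m`:
every value `1, …, m` appears. -/
def IsPacked (a b m : ℕ) (T : ℕ → ℕ → ℕ) : Prop :=
  ∀ v, 1 ≤ v → v ≤ m → ∃ i j, i < a ∧ j < b ∧ T i j = v

/-- The minimal label among the (at most two) filled southeast neighbors of cell
`(i,j)` in a partial filling `F` (`0` denotes an empty cell); `0` if there is no
filled southeast neighbor. -/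
def seMin (a b : ℕ) (F : ℕ → ℕ → ℕ) (i j : ℕ) : ℕ :=
  let s := if i + 1 < a then F (i + 1) j else 0
  let e := if j + 1 < b then F i (j + 1) else 0
  if s = 0 then e else if e = 0 then s else min s e

/-- One simultaneous K-jeu-de-taquin sliding step: every empty cell takes the
minimal label of its filled southeast neighbors, and that label is erased from
each southeast neighbor in which it appears. -/
def kStep (a b : ℕ) (F : ℕ → ℕ → ℕ) : ℕ → ℕ → ℕ := fun i j =>
  if i < a ∧ j < b then
    if F i j = 0 then seMin a b F i j
    else if (0 < i ∧ F (i - 1) j = 0 ∧ seMin a b F (i - 1) j = F i j) ∨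
            (0 < j ∧ F i (j - 1) = 0 ∧ seMin a b F i (j - 1) = F i j) then 0
    else F i j
  else 0

/-- K-promotion on increasing tableaux of rectangular shape `a × b` with entries
at most `m`: delete the entry `1`, slide repeatedly (for a rectangle, `a + b`
steps more than suffice for the process to stabilize), fill empty cells with
`m + 1`, and subtract `1` from every entry. -/
def KPro (a b m : ℕ) (T : ℕ → ℕ → ℕ) : ℕ → ℕ → ℕ := fun i j =>
  if i < a ∧ j < b then
    let G := (kStep a b)^[a + b]
      (fun i' j' => if i' < a ∧ j' < b then (if T i' j' = 1 then 0 else T i' j') else 0)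
    if G i j = 0 then m else G i j - 1
  else 0

/-- `p` is a cell of the product-of-chains poset `[a] × [b]` (indexed from 0). -/
def IsCell (a b : ℕ) (p : ℕ × ℕ) : Prop := p.1 < a ∧ p.2 < b

/-- `I` is an order ideal (downward-closed subset) of the poset `[a] × [b]`. -/
def IsIdeal (a b : ℕ) (I : Set (ℕ × ℕ)) : Prop :=
  (∀ p ∈ I, IsCell a b p) ∧ ∀ p q : ℕ × ℕ, q ∈ I → p ≤ q → p ∈ I

/-- `S` is an upper set (order filter, upward-closed subset) of the poset `[a] × [b]`. -/
def IsUpper (a b : ℕ) (S : Set (ℕ × ℕ)) : Prop :=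
  (∀ p ∈ S, IsCell a b p) ∧ ∀ p q : ℕ × ℕ, p ∈ S → IsCell a b q → p ≤ q → q ∈ S

/-- Rowmotion on order ideals of `[a] × [b]`: `I` is sent to the order ideal
generated by the minimal elements of the complement of `I`. -/
def Row (a b : ℕ) (I : Set (ℕ × ℕ)) : Set (ℕ × ℕ) :=
  {p | ∃ q, (IsCell a b q ∧ q ∉ I) ∧
        (∀ r, IsCell a b r → r ∉ I → r ≤ q → r = q) ∧ p ≤ q}

/-- The staircase order ideal `S_r = {(i,j) : i + j < r}` of `[a] × [b]`
(0-indexed; with 1-based coordinates this is `i + j - 2 < r`). -/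
def Stair (a b r : ℕ) : Set (ℕ × ℕ) :=
  {p | IsCell a b p ∧ p.1 + p.2 < r}

/-- The q-integer `[n]_q = 1 + q + ⋯ + q^(n-1)` as a polynomial in `ℤ[q]`. -/
noncomputable def qnat (n : ℕ) : Polynomial ℤ := ∑ i ∈ Finset.range n, X ^ i

/-- The q-factorial `[n]_q! = [n]_q [n-1]_q ⋯ [1]_q`. -/
noncomputable def qfact (n : ℕ) : Polynomial ℤ := ∏ i ∈ Finset.range n, qnat (i + 1)

/-- `p` is a cell of the toothbrush shape `(2,2,2,1^(k-2))` (cells indexed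
from 0): three rows of length 2 followed by `k - 2` rows of length 1. -/
def TCell (k : ℕ) (p : ℕ × ℕ) : Prop :=
  (p.1 < 3 ∧ p.2 < 2) ∨ (p.1 < k + 1 ∧ p.2 = 0)

/-- A standard Young tableau of toothbrush shape `(2,2,2,1^(k-2))`: a bijective
filling of the `k + 4` cells by the values `1, …, k + 4`, strictly increasing
along rows and columns, normalized to be `0` outside the shape. -/
def IsToothSYT (k : ℕ) (T : ℕ × ℕ → ℕ) : Prop :=
  Set.BijOn T {p | TCell k p} (Set.Icc 1 (k + 4)) ∧
  (∀ i j j', j < j' → TCell k (i, j) → TCell k (i, j') → T (i, j) < T (i, j')) ∧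
  (∀ i i' j, i < i' → TCell k (i, j) → TCell k (i', j) → T (i, j) < T (i', j)) ∧
  (∀ p, ¬ TCell k p → T p = 0)

/-- The map `Θ` sending an increasing tableau `T ∈ Inc^(a+b)(a × b)` to the
order ideal `{(a-i+1, b-j+1) : T(i,j) = i+j}` of `[a] × [b]` (written here with
0-indexed cells and the corresponding entry condition `T i j = i + j + 2`). -/
def theta (a b : ℕ) (T : ℕ → ℕ → ℕ) : Set (ℕ × ℕ) :=
  {p | ∃ i j, i < a ∧ j < b ∧ T i j = i + j + 2 ∧ p = (a - 1 - i, b - 1 - j)}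

lemma exists_ordered (s : Finset ℕ) (h : s.card = 3) : ∃ a b c, a < b ∧ b < c ∧ s = {a,b,c} := by
  obtain ⟨x, y, z, hxy, hxz, hyz, rfl⟩ := Finset.card_eq_three.mp h
  have hperm : ∀ a b c : ℕ, (∀ v, (v=x∨v=y∨v=z) ↔ (v=a∨v=b∨v=c)) → ({x,y,z} : Finset ℕ) = {a,b,c} := by
    intro a b c h; ext v; simp only [Finset.mem_insert, Finset.mem_singleton]; exact h v
  rcases Nat.lt_trichotomy x y with h1|h1|h1 <;> rcases Nat.lt_trichotomy x z with h2|h2|h2 <;>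
    rcases Nat.lt_trichotomy y z with h3|h3|h3 <;>
  first
  | omega
  | exact ⟨x,y,z, by omega, by omega, hperm _ _ _ (by tauto)⟩
  | exact ⟨x,z,y, by omega, by omega, hperm _ _ _ (by tauto)⟩
  | exact ⟨y,x,z, by omega, by omega, hperm _ _ _ (by tauto)⟩
  | exact ⟨y,z,x, by omega, by omega, hperm _ _ _ (by tauto)⟩
  | exact ⟨z,x,y, by omega, by omega, hperm _ _ _ (by tauto)⟩
  | exact ⟨z,y,x, by omega, by omega, hperm _ _ _ (by tauto)⟩

lemma sorted_getD_lt {L : List ℕ} (hs : L.Pairwise (· < ·)) {i j : ℕ}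
    (hij : i < j) (hj : j < L.length) : L.getD i 0 < L.getD j 0 := by
  have hi : i < L.length := lt_trans hij hj
  rw [List.getD_eq_getElem L 0 hi, List.getD_eq_getElem L 0 hj]
  have := List.pairwise_iff_get.mp hs ⟨i, hi⟩ ⟨j, hj⟩ hij
  simpa using this

lemma sorted_getD_le {L : List ℕ} (hs : L.Pairwise (· < ·)) {i j : ℕ}
    (hij : i ≤ j) (hj : j < L.length) : L.getD i 0 ≤ L.getD j 0 := by
  rcases Nat.eq_or_lt_of_le hij with rfl | h
  · exact le_refl _
  · exact le_of_lt (sorted_getD_lt hs h hj)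

lemma mem_getD {L : List ℕ} {v : ℕ} (h : v ∈ L) : ∃ i, i < L.length ∧ L.getD i 0 = v := by
  obtain ⟨n, hn⟩ := List.mem_iff_get.mp h
  exact ⟨n.1, n.2, by rw [List.getD_eq_getElem L 0 n.2]; simpa [List.get_eq_getElem] using hn⟩

lemma idx_lt {L : List ℕ} (hs : L.Pairwise (· < ·)) {i j : ℕ} (hi : i < L.length)
    (h : L.getD i 0 < L.getD j 0) : i < j := by
  by_contra hc
  push_neg at hc
  have := sorted_getD_le hs hc hi
  omega

lemma getD0_le {L : List ℕ} (hs : L.Pairwise (· < ·)) {y : ℕ} (hy : y ∈ L) : L.getD 0 0 ≤ y := by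
  obtain ⟨iy, hiy, ey⟩ := mem_getD hy
  have := sorted_getD_le hs (Nat.zero_le iy) hiy
  omega

lemma getD1_le {L : List ℕ} (hs : L.Pairwise (· < ·)) {y z : ℕ} (hy : y ∈ L) (hz : z ∈ L)
    (hyz : y < z) : L.getD 1 0 ≤ z := by
  obtain ⟨iy, hiy, ey⟩ := mem_getD hy
  obtain ⟨iz, hiz, ez⟩ := mem_getD hz
  have h1 : iy < iz := idx_lt hs hiy (by omega)
  have := sorted_getD_le hs (show 1 ≤ iz by omega) hiz
  omega

lemma getD2_le {L : List ℕ} (hs : L.Pairwise (· < ·)) {y z w : ℕ} (hy : y ∈ L) (hz : z ∈ L)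
    (hw : w ∈ L) (hyz : y < z) (hzw : z < w) : L.getD 2 0 ≤ w := by
  obtain ⟨iy, hiy, ey⟩ := mem_getD hy
  obtain ⟨iz, hiz, ez⟩ := mem_getD hz
  obtain ⟨iw, hiw, ew⟩ := mem_getD hw
  have h1 : iy < iz := idx_lt hs hiy (by omega)
  have h2 : iz < iw := idx_lt hs hiz (by omega)
  have := sorted_getD_le hs (show 2 ≤ iw by omega) hiw
  omega

lemma strictmono_image_eq {n : ℕ} {f g : ℕ → ℕ}
    (hf : ∀ i j, i < j → j < n → f i < f j) (hg : ∀ i j, i < j → j < n → g i < g j)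
    (h1 : ∀ i, i < n → ∃ j, j < n ∧ g j = f i) (h2 : ∀ i, i < n → ∃ j, j < n ∧ f j = g i) :
    ∀ i, i < n → f i = g i := by
  intro i
  induction i using Nat.strong_induction_on with
  | _ i IH =>
    intro hi
    obtain ⟨j, hj, hgj⟩ := h1 i hi
    obtain ⟨j', hj', hfj'⟩ := h2 i hi
    have hij : i ≤ j := by
      by_contra hc
      push_neg at hc
      have e1 := IH j hc hj
      have e2 := hf j i hc hi
      omega
    have hij' : i ≤ j' := by
      by_contra hc
      push_neg at hc
      have e1 := IH j' hc hj'
      have e2 := hg j' i hc hi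
      omega
    have hgle : g i ≤ g j := by
      rcases Nat.eq_or_lt_of_le hij with rfl | h
      · exact le_refl _
      · exact le_of_lt (hg i j h hj)
    have hfle : f i ≤ f j' := by
      rcases Nat.eq_or_lt_of_le hij' with rfl | h
      · exact le_refl _
      · exact le_of_lt (hf i j' h hj')
    omega

lemma tcell_iff (k : ℕ) (hk : 2 ≤ k) (i j : ℕ) :
    TCell k (i, j) ↔ (j = 1 ∧ i < 3) ∨ (j = 0 ∧ i < k + 1) := by
  simp only [TCell]
  omega

def buildT (k b1 b2 b3 : ℕ) (L : List ℕ) : ℕ × ℕ → ℕ := fun p =>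
  if p.2 = 1 ∧ p.1 < 3 then (if p.1 = 0 then b1 else if p.1 = 1 then b2 else b3)
  else if p.2 = 0 ∧ p.1 < k + 1 then L.getD p.1 0 else 0

lemma buildT_col1 (k b1 b2 b3 : ℕ) (L : List ℕ) (i : ℕ) :
    buildT k b1 b2 b3 L (i, 1) =
      if i < 3 then (if i = 0 then b1 else if i = 1 then b2 else b3) else 0 := by
  simp [buildT]

lemma buildT_col0 (k b1 b2 b3 : ℕ) (L : List ℕ) (i : ℕ) :
    buildT k b1 b2 b3 L (i, 0) = if i < k + 1 then L.getD i 0 else 0 := by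
  simp [buildT]

lemma build (k : ℕ) (hk : 2 ≤ k) (b1 b2 b3 : ℕ) (h12 : b1 < b2) (h23 : b2 < b3)
    (hb1 : 2 ≤ b1) (hb3 : b3 ≤ k + 4) (hne : ¬(b1 = 2 ∧ b2 = 3)) (h6 : 6 ≤ b3) :
    ∃ T : ℕ × ℕ → ℕ, IsToothSYT k T ∧ T (0,1) = b1 ∧ T (1,1) = b2 ∧ T (2,1) = b3 := by
  classical
  set c : Finset ℕ := Finset.Icc 1 (k + 4) \ {b1, b2, b3} with hcdef
  set L : List ℕ := c.sort (· ≤ ·) with hLdef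
  have hsub : ({b1, b2, b3} : Finset ℕ) ⊆ Finset.Icc 1 (k + 4) := by
    intro v hv
    simp only [Finset.mem_insert, Finset.mem_singleton] at hv
    simp only [Finset.mem_Icc]
    omega
  have hcard3 : ({b1, b2, b3} : Finset ℕ).card = 3 :=
    Finset.card_eq_three.mpr ⟨b1, b2, b3, by omega, by omega, by omega, rfl⟩
  have hccard : c.card = k + 1 := by
    rw [hcdef, Finset.card_sdiff_of_subset hsub, Nat.card_Icc, hcard3]
    omega
  have hlen : L.length = k + 1 := by rw [hLdef, Finset.length_sort]; exact hccard
  have hsort : L.Pairwise (· < ·) := (Finset.sortedLT_sort c).pairwise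
  have hmemc : ∀ v, v ∈ c ↔ (1 ≤ v ∧ v ≤ k + 4 ∧ v ≠ b1 ∧ v ≠ b2 ∧ v ≠ b3) := by
    intro v
    simp only [hcdef, Finset.mem_sdiff, Finset.mem_Icc, Finset.mem_insert, Finset.mem_singleton]
    tauto
  have hgetmem : ∀ i, i < k + 1 → L.getD i 0 ∈ c := by
    intro i hi
    have hi' : i < L.length := by omega
    rw [List.getD_eq_getElem L 0 hi']
    exact (Finset.mem_sort _).mp (List.getElem_mem hi')
  have h1L : (1 : ℕ) ∈ L := (Finset.mem_sort _).mpr ((hmemc 1).mpr (by omega))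
  refine ⟨buildT k b1 b2 b3 L, ⟨⟨?_, ?_, ?_⟩, ?_, ?_, ?_⟩,
    by rw [buildT_col1]; norm_num, by rw [buildT_col1]; norm_num, by rw [buildT_col1]; norm_num⟩
  · -- MapsTo
    rintro ⟨i, j⟩ hp
    rcases (tcell_iff k hk i j).mp hp with ⟨hj, hi⟩ | ⟨hj, hi⟩
    · subst hj
      rw [Set.mem_Icc, buildT_col1, if_pos hi]
      split_ifs <;> omega
    · subst hj
      rw [Set.mem_Icc, buildT_col0, if_pos hi]
      have := (hmemc _).mp (hgetmem i hi)
      omega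
  · -- InjOn
    rintro ⟨i, j⟩ hp ⟨i', j'⟩ hq heq
    simp only [Set.mem_setOf_eq] at hp hq
    rcases (tcell_iff k hk i j).mp hp with ⟨hj, hi⟩ | ⟨hj, hi⟩ <;>
      rcases (tcell_iff k hk i' j').mp hq with ⟨hj', hi'⟩ | ⟨hj', hi'⟩ <;> subst hj <;> subst hj'
    · rw [buildT_col1, buildT_col1, if_pos hi, if_pos hi'] at heq
      have : i = i' := by split_ifs at heq <;> omega
      rw [this]
    · exfalso
      rw [buildT_col1, buildT_col0, if_pos hi, if_pos hi'] at heq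
      have := (hmemc _).mp (hgetmem i' hi')
      split_ifs at heq <;> omega
    · exfalso
      rw [buildT_col0, buildT_col1, if_pos hi, if_pos hi'] at heq
      have := (hmemc _).mp (hgetmem i hi)
      split_ifs at heq <;> omega
    · rw [buildT_col0, buildT_col0, if_pos hi, if_pos hi'] at heq
      have : i = i' := by
        rcases Nat.lt_trichotomy i i' with h | h | h
        · have := sorted_getD_lt hsort h (by omega)
          omega
        · exact h
        · have := sorted_getD_lt hsort h (by omega)
          omega
      rw [this]
  · -- SurjOn
    intro v hv
    rw [Set.mem_Icc] at hv
    by_cases hvs : v = b1 ∨ v = b2 ∨ v = b3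
    · rcases hvs with rfl | rfl | rfl
      · exact ⟨(0, 1), (tcell_iff k hk 0 1).mpr (Or.inl ⟨rfl, by omega⟩),
          by rw [buildT_col1]; norm_num⟩
      · exact ⟨(1, 1), (tcell_iff k hk 1 1).mpr (Or.inl ⟨rfl, by omega⟩),
          by rw [buildT_col1]; norm_num⟩
      · exact ⟨(2, 1), (tcell_iff k hk 2 1).mpr (Or.inl ⟨rfl, by omega⟩),
          by rw [buildT_col1]; norm_num⟩
    · push_neg at hvs
      have hvc : v ∈ L := (Finset.mem_sort _).mpr ((hmemc v).mpr
        ⟨hv.1, hv.2, hvs.1, hvs.2.1, hvs.2.2⟩)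
      obtain ⟨iv, hiv, hev⟩ := mem_getD hvc
      exact ⟨(iv, 0), (tcell_iff k hk iv 0).mpr (Or.inr ⟨rfl, by omega⟩),
        by rw [buildT_col0, if_pos (by omega)]; exact hev⟩
  · -- rows
    intro i j j' hjj' hcj hcj'
    have h1 := (tcell_iff k hk i j).mp hcj
    have h2 := (tcell_iff k hk i j').mp hcj'
    have hj0 : j = 0 := by omega
    have hj1 : j' = 1 := by omega
    have hi3 : i < 3 := by omega
    subst hj0; subst hj1
    rw [buildT_col0, buildT_col1, if_pos (by omega), if_pos hi3]
    interval_cases i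
    · have := getD0_le hsort h1L
      show L.getD 0 0 < b1
      omega
    · by_cases hb12 : b1 = 2
      · have hb24 : 4 ≤ b2 := by
          have : b2 ≠ 3 := fun h => hne ⟨hb12, h⟩
          omega
        have h3L : (3 : ℕ) ∈ L := (Finset.mem_sort _).mpr ((hmemc 3).mpr (by omega))
        have := getD1_le hsort h1L h3L (by omega)
        show L.getD 1 0 < b2
        omega
      · have h2L : (2 : ℕ) ∈ L := (Finset.mem_sort _).mpr ((hmemc 2).mpr (by omega))
        have := getD1_le hsort h1L h2L (by omega)
        show L.getD 1 0 < b2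
        omega
    · have hFcard : 2 ≤ (({2, 3, 4, 5} : Finset ℕ) \ {b1, b2}).card := by
        have hc4 : (({2, 3, 4, 5} : Finset ℕ)).card = 4 := by decide
        have hc2 : ({b1, b2} : Finset ℕ).card ≤ 2 := by
          refine le_trans (Finset.card_insert_le _ _) ?_
          simp
        have := Finset.le_card_sdiff ({b1, b2} : Finset ℕ) {2, 3, 4, 5}
        omega
      have hFne : (({2, 3, 4, 5} : Finset ℕ) \ {b1, b2}).Nonempty :=
        Finset.card_pos.mp (by omega)
      set z := (({2, 3, 4, 5} : Finset ℕ) \ {b1, b2}).min' hFne with hz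
      set w := (({2, 3, 4, 5} : Finset ℕ) \ {b1, b2}).max' hFne with hw
      have hzw : z < w := Finset.min'_lt_max'_of_card _ (by omega)
      have hzF := Finset.min'_mem (({2, 3, 4, 5} : Finset ℕ) \ {b1, b2}) hFne
      have hwF := Finset.max'_mem (({2, 3, 4, 5} : Finset ℕ) \ {b1, b2}) hFne
      rw [Finset.mem_sdiff] at hzF hwF
      simp only [Finset.mem_insert, Finset.mem_singleton, not_or] at hzF hwF
      have hzL : z ∈ L := (Finset.mem_sort _).mpr ((hmemc z).mpr (by omega))
      have hwL : w ∈ L := (Finset.mem_sort _).mpr ((hmemc w).mpr (by omega))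
      have := getD2_le hsort h1L hzL hwL (by omega) hzw
      show L.getD 2 0 < b3
      omega
  · -- columns
    intro i i' j hii' hci hci'
    have h1 := (tcell_iff k hk i j).mp hci
    have h2 := (tcell_iff k hk i' j).mp hci'
    rcases h2 with ⟨hj, hi'3⟩ | ⟨hj, hi'k⟩
    · subst hj
      rw [buildT_col1, buildT_col1, if_pos (by omega), if_pos hi'3]
      split_ifs <;> omega
    · subst hj
      rw [buildT_col0, buildT_col0, if_pos (by omega), if_pos hi'k]
      exact sorted_getD_lt hsort hii' (by omega)
  · -- outside
    rintro ⟨i, j⟩ hp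
    have hA : ¬(j = 1 ∧ i < 3) := fun h => hp ((tcell_iff k hk i j).mpr (Or.inl h))
    have hB : ¬(j = 0 ∧ i < k + 1) := fun h => hp ((tcell_iff k hk i j).mpr (Or.inr h))
    simp only [buildT, if_neg hA, if_neg hB]

lemma triple_eq {a b c d e f : ℕ} (h1 : a < b) (h2 : b < c) (h3 : d < e) (h4 : e < f)
    (h : ({a, b, c} : Finset ℕ) = {d, e, f}) : a = d ∧ b = e ∧ c = f := by
  have H := Finset.ext_iff.mp h
  simp only [Finset.mem_insert, Finset.mem_singleton] at H
  have h5 := H a; have h6 := H b; have h7 := H c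
  have h8 := H d; have h9 := H e; have h10 := H f
  omega

lemma key_surj (k : ℕ) (hk : 2 ≤ k) (A B : ℕ × ℕ → ℕ) (hA : IsToothSYT k A)
    (hB : IsToothSYT k B)
    (hab : ({A (0,1), A (1,1), A (2,1)} : Finset ℕ) = {B (0,1), B (1,1), B (2,1)}) :
    ∀ i, i < k + 1 → ∃ j, j < k + 1 ∧ B (j, 0) = A (i, 0) := by
  intro i hi
  have hcell : (i, 0) ∈ {p | TCell k p} := Or.inr ⟨hi, rfl⟩
  have hmem := hA.1.1 hcell
  have hnot : A (i, 0) ∉ ({A (0,1), A (1,1), A (2,1)} : Finset ℕ) := by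
    simp only [Finset.mem_insert, Finset.mem_singleton]
    push_neg
    refine ⟨fun h => ?_, fun h => ?_, fun h => ?_⟩
    · have := hA.1.2.1 hcell (show ((0:ℕ),(1:ℕ)) ∈ {p | TCell k p} from Or.inl ⟨by omega, by omega⟩) h
      simp at this
    · have := hA.1.2.1 hcell (show ((1:ℕ),(1:ℕ)) ∈ {p | TCell k p} from Or.inl ⟨by omega, by omega⟩) h
      simp at this
    · have := hA.1.2.1 hcell (show ((2:ℕ),(1:ℕ)) ∈ {p | TCell k p} from Or.inl ⟨by omega, by omega⟩) h
      simp at this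
  rw [hab] at hnot
  obtain ⟨p, hp, hpe⟩ := hB.1.2.2 hmem
  obtain ⟨a, b⟩ := p
  simp only [Set.mem_setOf_eq] at hp
  rcases (tcell_iff k hk a b).mp hp with ⟨hb1, ha3⟩ | ⟨hb0, hak⟩
  · exfalso
    apply hnot
    subst hb1
    rw [← hpe]
    interval_cases a <;> simp
  · subst hb0
    exact ⟨a, hak, hpe⟩


theorem stmt16 (k : ℕ) (hk : 2 ≤ k) :
    Set.InjOn (fun T : ℕ × ℕ → ℕ => ({T (0, 1), T (1, 1), T (2, 1)} : Finset ℕ))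
      {T : ℕ × ℕ → ℕ | IsToothSYT k T} ∧
    (fun T : ℕ × ℕ → ℕ => ({T (0, 1), T (1, 1), T (2, 1)} : Finset ℕ)) ''
        {T : ℕ × ℕ → ℕ | IsToothSYT k T}
      = {s : Finset ℕ | s.card = 3 ∧ (∀ v ∈ s, 2 ≤ v ∧ v ≤ k + 4) ∧
          ¬ ((∃ j, 4 ≤ j ∧ j ≤ k + 4 ∧ s = {2, 3, j}) ∨ s = {2, 4, 5} ∨ s = {3, 4, 5})} := by
  have chain : ∀ T : ℕ × ℕ → ℕ, IsToothSYT k T → T (0,1) < T (1,1) ∧ T (1,1) < T (2,1) := by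
    intro T hT
    exact ⟨hT.2.2.1 0 1 1 (by omega) (Or.inl ⟨by omega, by omega⟩) (Or.inl ⟨by omega, by omega⟩),
      hT.2.2.1 1 2 1 (by omega) (Or.inl ⟨by omega, by omega⟩) (Or.inl ⟨by omega, by omega⟩)⟩
  constructor
  · -- injectivity
    intro T hT T' hT' heq
    simp only [Set.mem_setOf_eq] at hT hT'
    have heq' : ({T (0,1), T (1,1), T (2,1)} : Finset ℕ) =
        {T' (0,1), T' (1,1), T' (2,1)} := heq
    funext p
    obtain ⟨i, j⟩ := p
    by_cases hc : TCell k (i, j)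
    · rcases (tcell_iff k hk i j).mp hc with ⟨hj, hi⟩ | ⟨hj, hi⟩
      · subst hj
        obtain ⟨c1, c2⟩ := chain T hT
        obtain ⟨c1', c2'⟩ := chain T' hT'
        obtain ⟨e1, e2, e3⟩ := triple_eq c1 c2 c1' c2' heq'
        interval_cases i
        · exact e1
        · exact e2
        · exact e3
      · subst hj
        refine strictmono_image_eq (f := fun i => T (i, 0)) (g := fun i => T' (i, 0))
          (n := k + 1) ?_ ?_ (key_surj k hk T T' hT hT' heq')
          (key_surj k hk T' T hT' hT heq'.symm) i hi
        · intro a b hab hb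
          exact hT.2.2.1 a b 0 hab (Or.inr ⟨by omega, rfl⟩) (Or.inr ⟨hb, rfl⟩)
        · intro a b hab hb
          exact hT'.2.2.1 a b 0 hab (Or.inr ⟨by omega, rfl⟩) (Or.inr ⟨hb, rfl⟩)
    · rw [hT.2.2.2 _ hc, hT'.2.2.2 _ hc]
  · -- image
    ext s
    simp only [Set.mem_image, Set.mem_setOf_eq]
    constructor
    · rintro ⟨T, hT, rfl⟩
      obtain ⟨c1, c2⟩ := chain T hT
      have c00 : ((0:ℕ),(0:ℕ)) ∈ {p | TCell k p} := Or.inr ⟨by omega, rfl⟩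
      have c10 : ((1:ℕ),(0:ℕ)) ∈ {p | TCell k p} := Or.inr ⟨by omega, rfl⟩
      have c20 : ((2:ℕ),(0:ℕ)) ∈ {p | TCell k p} := Or.inr ⟨by omega, rfl⟩
      have c01 : ((0:ℕ),(1:ℕ)) ∈ {p | TCell k p} := Or.inl ⟨by omega, by omega⟩
      have c11 : ((1:ℕ),(1:ℕ)) ∈ {p | TCell k p} := Or.inl ⟨by omega, by omega⟩
      have c21 : ((2:ℕ),(1:ℕ)) ∈ {p | TCell k p} := Or.inl ⟨by omega, by omega⟩
      have m00 := hT.1.1 c00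
      have m01 := hT.1.1 c01
      have m11 := hT.1.1 c11
      have m21 := hT.1.1 c21
      rw [Set.mem_Icc] at m00 m01 m11 m21
      have r0 : T (0,0) < T (0,1) := hT.2.1 0 0 1 (by omega) (Or.inr ⟨by omega, rfl⟩) (Or.inl ⟨by omega, by omega⟩)
      have r1 : T (1,0) < T (1,1) := hT.2.1 1 0 1 (by omega) (Or.inr ⟨by omega, rfl⟩) (Or.inl ⟨by omega, by omega⟩)
      have r2 : T (2,0) < T (2,1) := hT.2.1 2 0 1 (by omega) (Or.inr ⟨by omega, rfl⟩) (Or.inl ⟨by omega, by omega⟩)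
      have d01 : T (0,0) < T (1,0) := hT.2.2.1 0 1 0 (by omega) (Or.inr ⟨by omega, rfl⟩) (Or.inr ⟨by omega, rfl⟩)
      have d12 : T (1,0) < T (2,0) := hT.2.2.1 1 2 0 (by omega) (Or.inr ⟨by omega, rfl⟩) (Or.inr ⟨by omega, rfl⟩)
      have ne1 : T (1,0) ≠ T (0,1) := fun h => by
        have := hT.1.2.1 c10 c01 h
        simp at this
      have ne2 : T (2,0) ≠ T (1,1) := fun h => by
        have := hT.1.2.1 c20 c11 h
        simp at this
      have ne3 : T (2,0) ≠ T (0,1) := fun h => by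
        have := hT.1.2.1 c20 c01 h
        simp at this
      refine ⟨Finset.card_eq_three.mpr ⟨_, _, _, by omega, by omega, by omega, rfl⟩, ?_, ?_⟩
      · intro v hv
        simp only [Finset.mem_insert, Finset.mem_singleton] at hv
        rcases hv with rfl | rfl | rfl <;> omega
      · rintro (⟨j, hj1, hj2, hsj⟩ | hsj | hsj)
        · obtain ⟨e1, e2, e3⟩ := triple_eq c1 c2 (by omega : (2:ℕ) < 3) (by omega : (3:ℕ) < j) hsj
          omega
        · obtain ⟨e1, e2, e3⟩ := triple_eq c1 c2 (by omega : (2:ℕ) < 4) (by omega : (4:ℕ) < 5) hsj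
          omega
        · obtain ⟨e1, e2, e3⟩ := triple_eq c1 c2 (by omega : (3:ℕ) < 4) (by omega : (4:ℕ) < 5) hsj
          omega
    · rintro ⟨hcard, hbounds, hexc⟩
      obtain ⟨b1, b2, b3, h12, h23, rfl⟩ := exists_ordered s hcard
      have hb1 : 2 ≤ b1 := (hbounds b1 (by simp)).1
      have hb3k : b3 ≤ k + 4 := (hbounds b3 (by simp)).2
      have hne : ¬(b1 = 2 ∧ b2 = 3) := by
        rintro ⟨rfl, rfl⟩
        exact hexc (Or.inl ⟨b3, by omega, hb3k, rfl⟩)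
      have h6 : 6 ≤ b3 := by
        by_contra hc
        push_neg at hc
        have : (b1 = 2 ∧ b2 = 3 ∧ b3 = 4) ∨ (b1 = 2 ∧ b2 = 3 ∧ b3 = 5) ∨
            (b1 = 2 ∧ b2 = 4 ∧ b3 = 5) ∨ (b1 = 3 ∧ b2 = 4 ∧ b3 = 5) := by omega
        rcases this with ⟨rfl, rfl, rfl⟩ | ⟨rfl, rfl, rfl⟩ | ⟨rfl, rfl, rfl⟩ | ⟨rfl, rfl, rfl⟩
        · exact hexc (Or.inl ⟨4, by omega, by omega, rfl⟩)
        · exact hexc (Or.inl ⟨5, by omega, by omega, rfl⟩)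
        · exact hexc (Or.inr (Or.inl rfl))
        · exact hexc (Or.inr (Or.inr rfl))
      obtain ⟨T, hT, e1, e2, e3⟩ := build k hk b1 b2 b3 h12 h23 hb1 hb3k hne h6
      exact ⟨T, hT, by rw [e1, e2, e3]⟩
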